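/- Let 𝓗 = (V, 𝓔) be a hypergraph with |V| ≥ 2, ⋃𝓔 = V, and whose automorphism group acts 2-set transitively on V (for every pair of 2-element subsets e, e' of V there is an automorphism mapping e to e'). Then for every e, e' ∈ [V]², 𝓗_e ≅ 𝓗_{e'}, and consequently f_𝓗 is irreducible. -/

import Mathlib

open Finset

abbrev BF := Σ n : ℕ, (Fin n → Bool) → Bool

def Minor (g f : BF) : Prop :=
  ∃ σ : Fin f.1 → Fin g.1, ∀ a : Fin g.1 → Bool, g.2 a = f.2 (a ∘ σ)

def EquivBF (f g : BF) : Prop := Minor f g ∧ Minor g f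

def StrictMinor (g f : BF) : Prop := Minor g f ∧ ¬ Minor f g

def Essential {n : ℕ} (f : (Fin n → Bool) → Bool) (i : Fin n) : Prop :=
  ∃ a b : Fin n → Bool, (∀ j, j ≠ i → a j = b j) ∧ f a ≠ f b

noncomputable def essArity {n : ℕ} (f : (Fin n → Bool) → Bool) : ℕ :=
  Nat.card {i : Fin n // Essential f i}

noncomputable def gapBF (f : BF) : ℕ :=
  sInf {d | ∃ g : BF, StrictMinor g f ∧ d = essArity f.2 - essArity g.2}

def fH {n : ℕ} (𝓔 : Finset (Finset (Fin n))) : (Fin n → Bool) → Bool :=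
  fun a => decide (Odd (𝓔.filter (fun E => ∀ i ∈ E, a i = true)).card)

def IsQuotientMap {n m : ℕ} (𝓔 : Finset (Finset (Fin n)))
    (𝓔' : Finset (Finset (Fin m))) (h : Fin m → Fin n) : Prop :=
  ∀ s : Finset (Fin n), s ∈ 𝓔 ↔ Odd (𝓔'.filter (fun t => t.image h = s)).card

abbrev HG := Σ n : ℕ, Finset (Finset (Fin n))

def HMinor (H H' : HG) : Prop := ∃ h : Fin H'.1 → Fin H.1, IsQuotientMap H.2 H'.2 h

def identEdges {n : ℕ} (𝓔 : Finset (Finset (Fin n))) (i j : Fin n) :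
    Finset (Finset (Fin n)) :=
  Finset.univ.filter (fun E => j ∉ E ∧
    ((i ∉ E ∧ E ∈ 𝓔) ∨
     (i ∈ E ∧ Odd ((if insert j E ∈ 𝓔 then 1 else 0) +
        (if E ∈ 𝓔 then 1 else 0) + (if insert j (E.erase i) ∈ 𝓔 then 1 else 0)))))

def EdgeIso {n : ℕ} (𝓔 𝓔' : Finset (Finset (Fin n))) : Prop :=
  ∃ φ : Fin n ≃ Fin n, ∀ s : Finset (Fin n), s.image φ ∈ 𝓔' ↔ s ∈ 𝓔

def IrreducibleBF (f : BF) : Prop :=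
  ∃ f' : BF, StrictMinor f' f ∧ ∀ g : BF, StrictMinor g f → Minor g f'

lemma exists_essential_of_ne {n : ℕ} (f : (Fin n → Bool) → Bool) :
    ∀ x y : Fin n → Bool, f x ≠ f y → ∃ k, x k ≠ y k ∧ Essential f k := by
  classical
  have key : ∀ (m : ℕ) (x y : Fin n → Bool),
      (Finset.univ.filter fun k => x k ≠ y k).card ≤ m → f x ≠ f y →
      ∃ k, x k ≠ y k ∧ Essential f k := by
    intro m
    induction m with
    | zero =>
      intro x y hcard hne
      exfalso; apply hne
      have : x = y := by
        funext k
        by_contra hk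
        have : k ∈ Finset.univ.filter fun k => x k ≠ y k := by simp [hk]
        have := Finset.card_pos.mpr ⟨k, this⟩
        omega
      rw [this]
    | succ m ih =>
      intro x y hcard hne
      have hDne : (Finset.univ.filter fun k => x k ≠ y k).Nonempty := by
        by_contra h
        apply hne
        have hD := Finset.not_nonempty_iff_eq_empty.mp h
        have : x = y := by
          funext k
          by_contra hk
          have : k ∈ Finset.univ.filter fun k => x k ≠ y k := by simp [hk]
          simp [hD] at this
        rw [this]
      obtain ⟨k, hk⟩ := hDne
      have hxyk : x k ≠ y k := by simpa using (Finset.mem_filter.mp hk).2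
      set z := Function.update x k (y k) with hz
      by_cases hfz : f x = f z
      · have hzy : f z ≠ f y := by rw [← hfz]; exact hne
        have hsub : (Finset.univ.filter fun j => z j ≠ y j) ⊆
            (Finset.univ.filter fun j => x j ≠ y j).erase k := by
          intro j hj
          have hjz : z j ≠ y j := by simpa using (Finset.mem_filter.mp hj).2
          have hjk : j ≠ k := by
            intro h; subst h; exact hjz (by simp [hz])
          refine Finset.mem_erase.mpr ⟨hjk, ?_⟩
          simp only [Finset.mem_filter, Finset.mem_univ, true_and]
          rwa [hz, Function.update_of_ne hjk] at hjz
        have hc2 : (Finset.univ.filter fun j => z j ≠ y j).card ≤ m := by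
          have := Finset.card_le_card hsub
          have := Finset.card_erase_of_mem hk
          omega
        obtain ⟨k', hk', hess⟩ := ih z y hc2 hzy
        refine ⟨k', ?_, hess⟩
        have hk'k : k' ≠ k := by
          intro h; subst h; exact hk' (by simp [hz])
        rwa [hz, Function.update_of_ne hk'k] at hk'
      · refine ⟨k, hxyk, x, z, ?_, hfz⟩
        intro j hj
        simp [hz, Function.update_of_ne hj]
  intro x y hne
  exact key _ x y le_rfl hne

lemma essArity_le_of_minor {g f : BF} (h : Minor g f) : essArity g.2 ≤ essArity f.2 := by
  classical
  obtain ⟨σ, hσ⟩ := h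
  have hmap : ∀ i : {i : Fin g.1 // Essential g.2 i},
      ∃ k : {k : Fin f.1 // Essential f.2 k}, σ k.1 = i.1 := by
    rintro ⟨i, a, b, hab, hne⟩
    have hfne : f.2 (a ∘ σ) ≠ f.2 (b ∘ σ) := by
      rw [← hσ a, ← hσ b]; exact hne
    obtain ⟨k, hk, hess⟩ := exists_essential_of_ne f.2 _ _ hfne
    have hσk : σ k = i := by
      by_contra hne2
      exact hk (hab _ hne2)
    exact ⟨⟨k, hess⟩, hσk⟩
  choose F hF using hmap
  have hinj : Function.Injective F := by
    intro i₁ i₂ h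
    have := hF i₁
    rw [h, hF i₂] at this
    exact Subtype.ext this.symm
  exact Nat.card_le_card_of_injective F hinj

lemma essential_fH {n : ℕ} (𝓔 : Finset (Finset (Fin n)))
    (hcover : 𝓔.sup id = Finset.univ) (i : Fin n) : Essential (fH 𝓔) i := by
  classical
  have hi : i ∈ 𝓔.sup id := by rw [hcover]; exact mem_univ i
  rw [Finset.mem_sup] at hi
  obtain ⟨E₁, hE₁, hiE₁⟩ := hi
  simp only [id] at hiE₁
  -- choose E₀ of minimal card among edges containing i
  obtain ⟨E₀, hE₀, hmin⟩ := Finset.exists_min_image (𝓔.filter fun E => i ∈ E)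
    Finset.card (⟨E₁, by simp [hE₁, hiE₁]⟩)
  have hE₀𝓔 : E₀ ∈ 𝓔 := (mem_filter.mp hE₀).1
  have hiE₀ : i ∈ E₀ := (mem_filter.mp hE₀).2
  set a : Fin n → Bool := fun k => decide (k ∈ E₀.erase i) with ha
  set b : Fin n → Bool := fun k => decide (k ∈ E₀) with hb
  refine ⟨a, b, ?_, ?_⟩
  · intro j hj
    simp [ha, hb, Finset.mem_erase, hj]
  · have hfa : (𝓔.filter (fun E => ∀ k ∈ E, a k = true)) =
        𝓔.filter fun E => E ⊆ E₀.erase i := by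
      apply filter_congr
      intro E _
      simp only [ha, decide_eq_true_eq, eq_iff_iff]
      constructor
      · intro h k hk; exact h k hk
      · intro h k hk; exact h hk
    have hfb : (𝓔.filter (fun E => ∀ k ∈ E, b k = true)) =
        insert E₀ (𝓔.filter fun E => E ⊆ E₀.erase i) := by
      ext E
      simp only [mem_filter, mem_insert, hb, decide_eq_true_eq]
      constructor
      · rintro ⟨hE, hsub⟩
        by_cases hiE : i ∈ E
        · left
          have hEsub : E ⊆ E₀ := fun k hk => hsub k hk
          have : E₀.card ≤ E.card := hmin E (by simp [hE, hiE])
          exact Finset.eq_of_subset_of_card_le hEsub this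
        · right
          exact ⟨hE, fun k hk => Finset.mem_erase.mpr
            ⟨fun h => hiE (h ▸ hk), hsub k hk⟩⟩
      · rintro (rfl | ⟨hE, hsub⟩)
        · exact ⟨hE₀𝓔, fun k hk => hk⟩
        · exact ⟨hE, fun k hk => (Finset.mem_erase.mp (hsub hk)).2⟩
    have hE₀not : E₀ ∉ 𝓔.filter fun E => E ⊆ E₀.erase i := by
      simp only [mem_filter, not_and]
      intro _ hsub
      exact absurd (hsub hiE₀) (by simp)
    have hcard : (𝓔.filter (fun E => ∀ k ∈ E, b k = true)).card =
        (𝓔.filter (fun E => ∀ k ∈ E, a k = true)).card + 1 := by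
      rw [hfa, hfb, Finset.card_insert_of_notMem hE₀not]
    simp only [fH, ne_eq, decide_eq_decide]
    rw [hcard]
    rw [Nat.odd_add_one]
    tauto

lemma fH_comp_equiv {n : ℕ} (𝓔 : Finset (Finset (Fin n))) (φ : Fin n ≃ Fin n)
    (hφ : ∀ E : Finset (Fin n), E.image φ ∈ 𝓔 ↔ E ∈ 𝓔) (b : Fin n → Bool) :
    fH 𝓔 (b ∘ φ) = fH 𝓔 b := by
  classical
  simp only [fH, decide_eq_decide]
  have : (𝓔.filter (fun E => ∀ i ∈ E, (b ∘ φ) i = true)).card =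
      (𝓔.filter (fun E => ∀ i ∈ E, b i = true)).card := by
    refine Finset.card_bij' (fun E _ => E.image φ) (fun F _ => F.image φ.symm) ?_ ?_ ?_ ?_
    · intro E hE
      simp only [mem_filter] at hE ⊢
      refine ⟨(hφ E).mpr hE.1, ?_⟩
      intro k hk
      obtain ⟨m, hm, rfl⟩ := Finset.mem_image.mp hk
      exact hE.2 m hm
    · intro F hF
      simp only [mem_filter] at hF ⊢
      have himg : (F.image φ.symm).image φ = F := by
        rw [Finset.image_image]; simp
      refine ⟨by rw [← hφ, himg]; exact hF.1, ?_⟩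
      intro k hk
      obtain ⟨m, hm, rfl⟩ := Finset.mem_image.mp hk
      have := hF.2 m hm
      simpa using this
    · intro E _; simp [Finset.image_image]
    · intro F _; simp [Finset.image_image]

  rw [this]

lemma mem_identEdges {n : ℕ} (𝓔 : Finset (Finset (Fin n))) (i j : Fin n)
    (E : Finset (Fin n)) : E ∈ identEdges 𝓔 i j ↔ (j ∉ E ∧
    ((i ∉ E ∧ E ∈ 𝓔) ∨
     (i ∈ E ∧ Odd ((if insert j E ∈ 𝓔 then 1 else 0) +
        (if E ∈ 𝓔 then 1 else 0) + (if insert j (E.erase i) ∈ 𝓔 then 1 else 0))))) := by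
  simp [identEdges]

lemma permIdent {n : ℕ} (𝓔 : Finset (Finset (Fin n))) (ψ : Fin n ≃ Fin n)
    (hψ : ∀ E : Finset (Fin n), E.image ψ ∈ 𝓔 ↔ E ∈ 𝓔) (i j : Fin n)
    (s : Finset (Fin n)) :
    s.image ψ ∈ identEdges 𝓔 (ψ i) (ψ j) ↔ s ∈ identEdges 𝓔 i j := by
  classical
  have hmem : ∀ k : Fin n, ψ k ∈ s.image ψ ↔ k ∈ s := by
    intro k
    constructor
    · intro h
      obtain ⟨m, hm, hmk⟩ := Finset.mem_image.mp h
      rwa [← ψ.injective hmk]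
    · exact fun h => Finset.mem_image_of_mem _ h
  have h1 : insert (ψ j) (s.image ψ) = (insert j s).image ψ := by
    rw [Finset.image_insert]
  have h2 : insert (ψ j) ((s.image ψ).erase (ψ i)) = (insert j (s.erase i)).image ψ := by
    rw [Finset.image_insert, Finset.image_erase ψ.injective]
  rw [mem_identEdges, mem_identEdges, hmem i, hmem j, h1, h2]
  simp only [hψ]

lemma swapIdent {n : ℕ} (𝓔 : Finset (Finset (Fin n))) (i j : Fin n) (hij : i ≠ j)
    (s : Finset (Fin n)) :
    s.image (Equiv.swap i j) ∈ identEdges 𝓔 j i ↔ s ∈ identEdges 𝓔 i j := by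
  classical
  rw [mem_identEdges, mem_identEdges]
  by_cases hjs : j ∈ s
  · -- both sides false: RHS first conjunct fails; LHS: i ∈ image
    have : i ∈ s.image (Equiv.swap i j) := by
      refine Finset.mem_image.mpr ⟨j, hjs, ?_⟩
      simp [Equiv.swap_apply_right]
    simp [this, hjs]
  · by_cases his : i ∈ s
    · have himg : s.image (Equiv.swap i j) = insert j (s.erase i) := by
        nth_rewrite 1 [← Finset.insert_erase his]
        rw [Finset.image_insert, Equiv.swap_apply_left]
        congr 1
        have heq : (s.erase i).image (Equiv.swap i j) = (s.erase i).image (fun x => x) := by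
          apply Finset.image_congr
          intro x hx
          simp only [Finset.mem_coe, Finset.mem_erase] at hx
          have hxj : x ≠ j := fun h => hjs (h ▸ hx.2)
          simp [Equiv.swap_apply_of_ne_of_ne hx.1 hxj]
        rw [heq, Finset.image_id']
      rw [himg]
      have hinotin : i ∉ insert j (s.erase i) := by
        simp [Ne.symm, hij, Finset.mem_erase]
      have hjin : j ∈ insert j (s.erase i) := Finset.mem_insert_self _ _
      have e1 : insert i (insert j (s.erase i)) = insert j s := by
        rw [Finset.insert_comm, Finset.insert_erase his]
      have e2 : (insert j (s.erase i)).erase j = s.erase i := by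
        rw [Finset.erase_insert]
        simp [Finset.mem_erase, hjs]
      have e3 : insert i ((insert j (s.erase i)).erase j) = s := by
        rw [e2, Finset.insert_erase his]
      rw [e1, e3, Nat.add_right_comm]
      simp [hinotin, hjin, his, hjs]
    · have himg : s.image (Equiv.swap i j) = s := by
        have : ∀ x ∈ s, Equiv.swap i j x = x := by
          intro x hx
          have hxi : x ≠ i := fun h => his (h ▸ hx)
          have hxj : x ≠ j := fun h => hjs (h ▸ hx)
          simp [Equiv.swap_apply_of_ne_of_ne hxi hxj]
        rw [Finset.image_congr (fun x hx => this x hx), Finset.image_id']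
      rw [himg]
      simp [his, hjs]

/-- identification map -/
def idMap {n : ℕ} (i j : Fin n) : Fin n → Fin n := fun k => if k = j then i else k

lemma irred_part {n : ℕ} (𝓔 : Finset (Finset (Fin n))) (hn : 2 ≤ n)
    (hcover : 𝓔.sup id = Finset.univ)
    (htrans : ∀ i j i' j' : Fin n, i ≠ j → i' ≠ j' →
      ∃ φ : Fin n ≃ Fin n, (∀ E : Finset (Fin n), E.image φ ∈ 𝓔 ↔ E ∈ 𝓔) ∧
        ({i, j} : Finset (Fin n)).image φ = {i', j'}) :
    IrreducibleBF ⟨n, fH 𝓔⟩ := by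
  classical
  have h1n : 1 < n := hn
  set i₀ : Fin n := ⟨0, by omega⟩ with hi₀
  set j₀ : Fin n := ⟨1, by omega⟩ with hj₀
  have hij₀ : i₀ ≠ j₀ := by simp [hi₀, hj₀, Fin.ext_iff]
  set τ₀ : Fin n → Fin n := idMap i₀ j₀ with hτ₀
  set f' : BF := ⟨n, fun a => fH 𝓔 (a ∘ τ₀)⟩ with hf'
  have hess_n : essArity (fH 𝓔) = n := by
    unfold essArity
    have : ∀ i : Fin n, Essential (fH 𝓔) i := essential_fH 𝓔 hcover
    rw [Nat.card_congr (Equiv.subtypeUnivEquiv this)]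
    simp
  have hτ₀ne : ∀ k, τ₀ k ≠ j₀ := by
    intro k
    simp only [hτ₀, idMap]
    split <;> simp_all
  have hf'j₀ : ¬ Essential f'.2 j₀ := by
    rintro ⟨a, b, hab, hne⟩
    apply hne
    show fH 𝓔 (a ∘ τ₀) = fH 𝓔 (b ∘ τ₀)
    congr 1
    funext k
    exact hab (τ₀ k) (hτ₀ne k)
  have hess_f' : essArity f'.2 < n := by
    have hle : essArity f'.2 ≤ Nat.card {i : Fin n // ¬ (i = j₀)} := by
      apply Nat.card_le_card_of_injective
        (fun x : {i : Fin n // Essential f'.2 i} =>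
          (⟨x.1, fun h => hf'j₀ (h ▸ x.2)⟩ : {i : Fin n // ¬ (i = j₀)}))
      intro x y h
      simp only [Subtype.mk.injEq] at h
      exact Subtype.ext h
    have : Nat.card {i : Fin n // ¬ (i = j₀)} = n - 1 := by
      rw [Nat.card_eq_fintype_card, Fintype.card_subtype_compl, Fintype.card_subtype_eq]
      simp
    omega
  -- minor from a pair identification
  have hident_minor : ∀ i j : Fin n, i ≠ j →
      Minor ⟨n, fun a => fH 𝓔 (a ∘ idMap i j)⟩ f' := by
    intro i j hij
    obtain ⟨φ, hφ, himg⟩ := htrans i j i₀ j₀ hij hij₀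
    set τ : Fin n → Fin n := idMap i j with hτdef
    have hmemsymm : ∀ k ∈ ({i₀, j₀} : Finset (Fin n)), φ.symm k ∈ ({i, j} : Finset (Fin n)) := by
      intro k hk
      rw [← himg] at hk
      obtain ⟨m, hm, rfl⟩ := Finset.mem_image.mp hk
      simpa using hm
    have hτsymm : ∀ k ∈ ({i₀, j₀} : Finset (Fin n)), τ (φ.symm k) = i := by
      intro k hk
      have := hmemsymm k hk
      simp only [Finset.mem_insert, Finset.mem_singleton] at this
      rcases this with h | h <;> simp [hτdef, idMap, h, hij, hij.symm]
    set ρ : Fin n → Fin n := fun k => if k = j₀ then τ (φ.symm i₀) else τ (φ.symm k) with hρ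
    refine ⟨ρ, ?_⟩
    intro a
    show fH 𝓔 (a ∘ τ) = fH 𝓔 ((a ∘ ρ) ∘ τ₀)
    have key : (a ∘ τ) = ((a ∘ ρ) ∘ τ₀) ∘ φ := by
      rw [show ((a ∘ ρ) ∘ τ₀) ∘ ⇑φ = ((a ∘ ρ) ∘ τ₀) ∘ ⇑φ from rfl]
      funext k
      simp only [Function.comp_apply]
      congr 1
      -- τ k = ρ (τ₀ (φ k))
      by_cases hk : φ k = j₀
      · have hk' : k = φ.symm j₀ := by rw [← hk]; simp
        have : τ₀ (φ k) = i₀ := by simp [hk, hτ₀, idMap]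
        rw [this]
        simp only [hρ]
        rw [if_neg (by exact hij₀)]
        rw [hτsymm i₀ (by simp), hk', hτsymm j₀ (by simp)]
      · have : τ₀ (φ k) = φ k := by simp [hτ₀, idMap, hk]
        rw [this]
        simp only [hρ]
        rw [if_neg hk]
        simp
    rw [key, fH_comp_equiv 𝓔 φ hφ]
  refine ⟨f', ⟨⟨τ₀, fun a => rfl⟩, ?_⟩, ?_⟩
  · intro hmf
    have h2 := essArity_le_of_minor hmf
    rw [show (⟨n, fH 𝓔⟩ : BF).snd = fH 𝓔 from rfl, hess_n] at h2
    omega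
  · rintro g ⟨⟨σ, hσ⟩, hnot⟩
    -- σ : Fin n → Fin g.1
    have hσnotinj : ¬ Function.Injective σ := by
      intro hinj
      apply hnot
      have : Nonempty (Fin n) := ⟨i₀⟩
      refine ⟨Function.invFun σ, ?_⟩
      intro b
      show fH 𝓔 b = g.2 (b ∘ Function.invFun σ)
      rw [hσ]
      congr 1
      funext k
      simp only [Function.comp_apply]
      rw [Function.leftInverse_invFun hinj]
    simp only [Function.Injective, not_forall] at hσnotinj
    obtain ⟨i, j, hσij, hij⟩ := hσnotinj
    have hminor1 : Minor g ⟨n, fun a => fH 𝓔 (a ∘ idMap i j)⟩ := by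
      refine ⟨σ, ?_⟩
      intro a
      rw [hσ]
      show fH 𝓔 (a ∘ σ) = fH 𝓔 ((a ∘ σ) ∘ idMap i j)
      congr 1
      funext k
      simp only [Function.comp_apply, idMap]
      split
      · next h => rw [h, ← hσij]
      · rfl
    obtain ⟨ρ₁, hρ₁⟩ := hident_minor i j hij
    obtain ⟨ρ₂, hρ₂⟩ := hminor1
    exact ⟨ρ₂ ∘ ρ₁, fun a => by rw [hρ₂, hρ₁]; rfl⟩


-- the main proof
theorem two_set_transitive_implies_irreducible (n : ℕ)
    (𝓔 : Finset (Finset (Fin n))) (hn : 2 ≤ n) (hcover : 𝓔.sup id = Finset.univ)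
    (htrans : ∀ i j i' j' : Fin n, i ≠ j → i' ≠ j' →
      ∃ φ : Fin n ≃ Fin n, (∀ E : Finset (Fin n), E.image φ ∈ 𝓔 ↔ E ∈ 𝓔) ∧
        ({i, j} : Finset (Fin n)).image φ = {i', j'}) :
    (∀ i j i' j' : Fin n, i ≠ j → i' ≠ j' →
      EdgeIso (identEdges 𝓔 i j) (identEdges 𝓔 i' j')) ∧
    IrreducibleBF ⟨n, fH 𝓔⟩ := by
  classical
  constructor
  · intro i j i' j' hij hij'
    obtain ⟨φ, hφ, himg⟩ := htrans i j i' j' hij hij'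
    have hφi : φ i ∈ ({i', j'} : Finset (Fin n)) := by
      rw [← himg]
      exact Finset.mem_image_of_mem _ (Finset.mem_insert_self _ _)
    have hφj : φ j ∈ ({i', j'} : Finset (Fin n)) := by
      rw [← himg]
      exact Finset.mem_image_of_mem _ (by simp)
    simp only [Finset.mem_insert, Finset.mem_singleton] at hφi hφj
    have hφij : φ i ≠ φ j := fun h => hij (φ.injective h)
    rcases hφi with hi' | hi'
    · have hj' : φ j = j' := by
        rcases hφj with h | h
        · exact absurd (hi' ▸ h : φ j = φ i) (Ne.symm hφij)
        · exact h
      refine ⟨φ, fun s => ?_⟩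
      rw [← hi', ← hj']
      exact permIdent 𝓔 φ hφ i j s
    · have hj' : φ j = i' := by
        rcases hφj with h | h
        · exact h
        · exact absurd (hi' ▸ h : φ j = φ i) (Ne.symm hφij)
      refine ⟨φ.trans (Equiv.swap i' j'), fun s => ?_⟩
      have himg2 : s.image (φ.trans (Equiv.swap i' j')) =
          (s.image φ).image (Equiv.swap j' i') := by
        rw [Finset.image_image, Equiv.coe_trans, Equiv.swap_comm]
      rw [himg2, swapIdent 𝓔 j' i' (Ne.symm hij') (s.image φ)]
      have := permIdent 𝓔 φ hφ i j s
      rw [hi', hj'] at this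
      exact this
  · exact irred_part 𝓔 hn hcover htrans
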